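/- For p ∈ (0, 1/2) the function h(t) = (1-(1-p)^t)/(2p - p(1-p)^{t-1}) is strictly increasing in the integer variable t ≥ 1, with h(1) = 1. -/

import Mathlib

theorem h_strict_increasing (p : ℝ) (hp : 0 < p) (hp2 : p < 1 / 2) :
    (∀ t : ℕ, 1 ≤ t →
        (1 - (1 - p) ^ t) / (2 * p - p * (1 - p) ^ (t - 1))
          < (1 - (1 - p) ^ (t + 1)) / (2 * p - p * (1 - p) ^ t)) ∧
      (1 - (1 - p) ^ 1) / (2 * p - p * (1 - p) ^ (1 - 1)) = 1 := by
  have hq0 : (0:ℝ) < 1 - p := by linarith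
  have hq1 : (1:ℝ) - p < 1 := by linarith
  have hqh : (1:ℝ)/2 < 1 - p := by linarith
  constructor
  · intro t ht
    obtain ⟨s, rfl⟩ := Nat.exists_eq_add_of_le ht
    have h1 : 1 + s - 1 = s := by omega
    rw [h1]
    set q : ℝ := 1 - p with hq
    set a : ℝ := q ^ s with ha
    have ha0 : 0 < a := pow_pos hq0 s
    have ha1 : a ≤ 1 := pow_le_one₀ (le_of_lt hq0) (le_of_lt hq1)
    have e1 : q ^ (1 + s) = a * q := by rw [ha, pow_add]; ring
    have e2 : q ^ (1 + s + 1) = a * q * q := by rw [ha, pow_add, pow_add]; ring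
    rw [e1, e2]
    have hd1 : 0 < 2 * p - p * a := by nlinarith
    have hd2 : 0 < 2 * p - p * (a * q) := by nlinarith
    rw [div_lt_div_iff₀ hd1 hd2]
    nlinarith [mul_pos ha0 (mul_pos hp (mul_pos (by linarith : (0:ℝ) < 2*q - 1) (by linarith : (0:ℝ) < 1 - q)))]
  · have : 2 * p - p * (1 - p) ^ (1 - 1) = p := by norm_num; ring
    rw [this]
    have hp' : p ≠ 0 := ne_of_gt hp
    field_simp
    ring
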